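/- Let H, E : (0, r̄) → ℝ be absolutely continuous functions with H > 0, and suppose |H'(r) − (2/r)E(r)| ≤ C H(r) for all r ∈ (0, r̄). If N(r) := E(r)/H(r) satisfies N(r) ≤ λ for all r in a subinterval [r̃, R] ⊂ (0, r̄), then the function r ↦ H(r) r^{−2λ} e^{−Cr} is monotone nonincreasing on [r̃, R]. Similarly, if N(r) ≥ σ on [r̃, R], then r ↦ H(r) r^{−2σ} e^{Cr} is monotone nondecreasing on [r̃, R]. -/

import Mathlib

/-- Doubling lemma: if `H > 0` is differentiable on `(0, r̄)` with
`|H'(r) − (2/r) E(r)| ≤ C H(r)`, then bounds on the Almgren quotient `N = E/H`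
on a subinterval `[r̃, R]` give monotonicity: if `N ≤ λ` there, then
`r ↦ H(r) r^{−2λ} e^{−Cr}` is nonincreasing, and if `N ≥ σ` there, then
`r ↦ H(r) r^{−2σ} e^{Cr}` is nondecreasing. -/
theorem doubling_lemma (C lam sig rbar rt R : ℝ) (hC : 0 < C)
    (hrt : 0 < rt) (hrtR : rt ≤ R) (hR : R < rbar)
    (H E H' : ℝ → ℝ)
    (hHpos : ∀ r ∈ Set.Ioo (0 : ℝ) rbar, 0 < H r)
    (hderiv : ∀ r ∈ Set.Ioo (0 : ℝ) rbar, HasDerivAt H (H' r) r)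
    (hbound : ∀ r ∈ Set.Ioo (0 : ℝ) rbar, |H' r - (2 / r) * E r| ≤ C * H r) :
    ((∀ r ∈ Set.Icc rt R, E r / H r ≤ lam) →
      AntitoneOn (fun r : ℝ => H r * r ^ (-(2 * lam)) * Real.exp (-(C * r)))
        (Set.Icc rt R)) ∧
    ((∀ r ∈ Set.Icc rt R, sig ≤ E r / H r) →
      MonotoneOn (fun r : ℝ => H r * r ^ (-(2 * sig)) * Real.exp (C * r))
        (Set.Icc rt R)) := by
  have hsub : Set.Icc rt R ⊆ Set.Ioo (0 : ℝ) rbar := fun r hr =>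
    ⟨lt_of_lt_of_le hrt hr.1, lt_of_le_of_lt hr.2 hR⟩
  have hint : interior (Set.Icc rt R) ⊆ Set.Icc rt R := interior_subset
  have key : ∀ (p c : ℝ) (x : ℝ), x ∈ Set.Ioo (0 : ℝ) rbar →
      HasDerivAt (fun r : ℝ => H r * r ^ p * Real.exp (c * r))
        (Real.exp (c * x) * x ^ p * (H' x + p * H x / x + c * H x)) x := by
    intro p c x hx
    have hx0 : (x : ℝ) ≠ 0 := ne_of_gt hx.1
    have h1 : HasDerivAt (fun r : ℝ => r ^ p) (p * x ^ (p - 1)) x :=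
      Real.hasDerivAt_rpow_const (Or.inl hx0)
    have h2 : HasDerivAt (fun r : ℝ => c * r) c x := by
      simpa using (hasDerivAt_id x).const_mul c
    have h3 := h2.exp
    have h4 := ((hderiv x hx).mul h1).mul h3
    convert h4 using 1
    · rfl
    · rfl
    · rfl
    have hsub1 : x ^ (p - 1) = x ^ p / x := by
      rw [Real.rpow_sub_one hx0]
    rw [hsub1]
    simp only [Pi.mul_apply]
    field_simp
  constructor
  · intro hN
    have keyA : ∀ x ∈ Set.Ioo (0 : ℝ) rbar,
        HasDerivAt (fun r : ℝ => H r * r ^ (-(2 * lam)) * Real.exp (-(C * r)))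
          (Real.exp (-(C * x)) * x ^ (-(2 * lam)) *
            (H' x + (-(2 * lam)) * H x / x + (-C) * H x)) x := by
      intro x hx
      have := key (-(2 * lam)) (-C) x hx
      simpa [neg_mul] using this
    apply antitoneOn_of_deriv_nonpos (convex_Icc rt R)
    · exact fun x hx => ((keyA x (hsub hx)).continuousAt).continuousWithinAt
    · exact fun x hx =>
        ((keyA x (hsub (hint hx))).differentiableAt).differentiableWithinAt
    · intro x hx
      have hx' := hsub (hint hx)
      have hd := (keyA x hx').deriv
      rw [hd]
      have hHx := hHpos x hx'
      have hEx : E x ≤ lam * H x := by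
        have := hN x (hint hx)
        calc E x = (E x / H x) * H x := by field_simp
        _ ≤ lam * H x := by nlinarith
      have hb := (abs_le.mp (hbound x hx')).2
      have hxpos : (0 : ℝ) < x := hx'.1
      have hbr : H' x + (-(2 * lam)) * H x / x + (-C) * H x ≤ 0 := by
        have h2x : (0 : ℝ) < 2 / x := by positivity
        have : (2 / x) * E x ≤ (2 / x) * (lam * H x) := by nlinarith
        have h2' : (2 / x) * (lam * H x) = 2 * lam * H x / x := by ring
        have hH' : H' x ≤ 2 * lam * H x / x + C * H x := by linarith [this, hb, h2'.symm.le, h2' ▸ this]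
        have : (-(2 * lam)) * H x / x = -(2 * lam * H x / x) := by ring
        linarith [this.le, this.ge, hH']
      have hpos : (0 : ℝ) < Real.exp (-(C * x)) * x ^ (-(2 * lam)) := by
        positivity
      nlinarith [hpos, hbr]
  · intro hN
    have keyB : ∀ x ∈ Set.Ioo (0 : ℝ) rbar,
        HasDerivAt (fun r : ℝ => H r * r ^ (-(2 * sig)) * Real.exp (C * r))
          (Real.exp (C * x) * x ^ (-(2 * sig)) *
            (H' x + (-(2 * sig)) * H x / x + C * H x)) x :=
      fun x hx => key (-(2 * sig)) C x hx
    apply monotoneOn_of_deriv_nonneg (convex_Icc rt R)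
    · exact fun x hx => ((keyB x (hsub hx)).continuousAt).continuousWithinAt
    · exact fun x hx =>
        ((keyB x (hsub (hint hx))).differentiableAt).differentiableWithinAt
    · intro x hx
      have hx' := hsub (hint hx)
      have hd := (keyB x hx').deriv
      rw [hd]
      have hHx := hHpos x hx'
      have hEx : sig * H x ≤ E x := by
        have := hN x (hint hx)
        calc sig * H x ≤ (E x / H x) * H x := by nlinarith
        _ = E x := by field_simp
      have hb := (abs_le.mp (hbound x hx')).1
      have hxpos : (0 : ℝ) < x := hx'.1
      have hbr : 0 ≤ H' x + (-(2 * sig)) * H x / x + C * H x := by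
        have h2x : (0 : ℝ) < 2 / x := by positivity
        have h1 : (2 / x) * (sig * H x) ≤ (2 / x) * E x := by nlinarith
        have h2 : (2 / x) * (sig * H x) = 2 * sig * H x / x := by ring
        have hH' : 2 * sig * H x / x - C * H x ≤ H' x := by linarith [h2 ▸ h1]
        have h3 : (-(2 * sig)) * H x / x = -(2 * sig * H x / x) := by ring
        linarith [h3.le, h3.ge]
      have hpos : (0 : ℝ) < Real.exp (C * x) * x ^ (-(2 * sig)) := by positivity
      nlinarith [hpos, hbr]
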